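/- arXiv:2411.18118 — 3 statements merged into one kernel-verified Lean document; each statement's English description precedes it below -/
import Mathlib

section
/- Adjoint gradient identity for the reduced cost (single load case): let I : (Fin N → ℝ) × (Fin M → ℝ) → ℝ be a differentiable cost function, fix T₀, and let ũ : Fin N → ℝ solve the adjoint system Kᵀ ·ᵥ ũ = g, where g is the gradient of the partial map u ↦ I(u, T₀) at u(T₀). Then the reduced cost Ĩ(T) = I(u(T), T) is differentiable at T₀ and for every direction h, its directional derivative satisfies DĨ(T₀)[h] = D_T I(u(T₀), ·)(T₀)[h] + ⟨ũ, Df_T(T₀)[h]⟩, where ⟨·,·⟩ is the Euclidean inner product on Fin N → ℝ; i.e., dI/dT = ∂I/∂T + ũᵀ · ∂f_T/∂T. -/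
/-- Adjoint gradient identity for the reduced cost (single load case):
if `utilde` solves the adjoint system `Kᵀ ·ᵥ utilde = g` where `g` is the (Euclidean) gradient of
`u ↦ I (u, T₀)` at `u T₀`, then the reduced cost `Ĩ T = I (u T, T)` is differentiable at `T₀`
and `DĨ(T₀)[h] = D_T I(u(T₀), ·)(T₀)[h] + ⟨utilde, Df_T(T₀)[h]⟩` for every direction `h`. -/
theorem adjoint_gradient_identity
    (N M : ℕ) (K : Matrix (Fin N) (Fin N) ℝ) (hK : IsUnit K)
    (f_ext : Fin N → ℝ) (f_T : (Fin M → ℝ) → (Fin N → ℝ))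
    (hf : Differentiable ℝ f_T)
    (u : (Fin M → ℝ) → (Fin N → ℝ))
    (hu : ∀ T, u T = (K⁻¹).mulVec (f_ext + f_T T))
    (I : (Fin N → ℝ) × (Fin M → ℝ) → ℝ) (hI : Differentiable ℝ I)
    (T₀ : Fin M → ℝ) (utilde g : Fin N → ℝ)
    (hg : ∀ v : Fin N → ℝ, fderiv ℝ (fun w => I (w, T₀)) (u T₀) v = ∑ i, g i * v i)
    (hadj : K.transpose.mulVec utilde = g) :
    DifferentiableAt ℝ (fun T => I (u T, T)) T₀ ∧
    ∀ h : Fin M → ℝ,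
      fderiv ℝ (fun T => I (u T, T)) T₀ h =
        fderiv ℝ (fun T => I (u T₀, T)) T₀ h + ∑ i, utilde i * fderiv ℝ f_T T₀ h i := by
  have hKdet : IsUnit K.det := (Matrix.isUnit_iff_isUnit_det K).mp hK
  set L : (Fin N → ℝ) →L[ℝ] (Fin N → ℝ) :=
    LinearMap.toContinuousLinearMap (Matrix.mulVecLin K⁻¹) with hLdef
  have hu_eq : u = fun T => L (f_ext + f_T T) := by
    funext T; rw [hu T]; simp [hLdef]
  set Df : (Fin M → ℝ) →L[ℝ] (Fin N → ℝ) := fderiv ℝ f_T T₀ with hDf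
  have hfd : HasFDerivAt f_T Df T₀ := (hf T₀).hasFDerivAt
  have hUd : HasFDerivAt u (L.comp Df) T₀ := by
    rw [hu_eq]
    exact L.hasFDerivAt.comp T₀ (hfd.const_add f_ext)
  -- the pair map
  have hφ : HasFDerivAt (fun T => (u T, T))
      ((L.comp Df).prod (ContinuousLinearMap.id ℝ _)) T₀ :=
    HasFDerivAt.prodMk hUd (hasFDerivAt_id T₀)
  set p : (Fin N → ℝ) × (Fin M → ℝ) := (u T₀, T₀) with hp
  set DI : ((Fin N → ℝ) × (Fin M → ℝ)) →L[ℝ] ℝ := fderiv ℝ I p with hDI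
  have hId : HasFDerivAt I DI p := (hI p).hasFDerivAt
  have htot0 := HasFDerivAt.comp (f := fun T => (u T, T)) T₀ hId hφ
  have htot : HasFDerivAt (fun T => I (u T, T))
      (DI.comp ((L.comp Df).prod (ContinuousLinearMap.id ℝ _))) T₀ := htot0
  refine ⟨htot.differentiableAt, fun h => ?_⟩
  -- partial derivative in T
  have hT : HasFDerivAt (fun T => I (u T₀, T))
      (DI.comp ((0 : (Fin M → ℝ) →L[ℝ] (Fin N → ℝ)).prod (ContinuousLinearMap.id ℝ _))) T₀ := by
    have : HasFDerivAt (fun T : Fin M → ℝ => (u T₀, T))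
        ((0 : (Fin M → ℝ) →L[ℝ] (Fin N → ℝ)).prod (ContinuousLinearMap.id ℝ _)) T₀ :=
      HasFDerivAt.prodMk (hasFDerivAt_const (u T₀) T₀) (hasFDerivAt_id T₀)
    exact hId.comp T₀ this
  -- partial derivative in u
  have hUpart : ∀ v : Fin N → ℝ, DI (v, 0) = ∑ i, g i * v i := by
    intro v
    have hw : HasFDerivAt (fun w => I (w, T₀))
        (DI.comp ((ContinuousLinearMap.id ℝ _).prod (0 : (Fin N → ℝ) →L[ℝ] (Fin M → ℝ)))) (u T₀) := by
      have : HasFDerivAt (fun w : Fin N → ℝ => (w, T₀))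
          ((ContinuousLinearMap.id ℝ _).prod (0 : (Fin N → ℝ) →L[ℝ] (Fin M → ℝ))) (u T₀) :=
        HasFDerivAt.prodMk (hasFDerivAt_id (u T₀)) (hasFDerivAt_const T₀ (u T₀))
      exact hId.comp (u T₀) this
    have := hg v
    rw [hw.fderiv] at this
    simpa using this
  have hdot : ∑ i, g i * (K⁻¹.mulVec (Df h)) i = ∑ i, utilde i * Df h i := by
    rw [← hadj]
    have e1 : ∑ i, (K.transpose.mulVec utilde) i * (K⁻¹.mulVec (Df h)) i
        = dotProduct (K.transpose.mulVec utilde) (K⁻¹.mulVec (Df h)) := rfl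
    rw [e1, Matrix.mulVec_transpose, ← Matrix.dotProduct_mulVec,
      Matrix.mulVec_mulVec, Matrix.mul_nonsing_inv K hKdet, Matrix.one_mulVec]
    rfl
  have hLval : L (Df h) = K⁻¹.mulVec (Df h) := by simp [hLdef]
  have key : DI (((L.comp Df).prod (ContinuousLinearMap.id ℝ _)) h)
      = DI (0, h) + ∑ i, utilde i * Df h i := by
    have hsplit : ((L.comp Df).prod (ContinuousLinearMap.id ℝ _)) h
        = ((L (Df h), 0) + (0, h) : (Fin N → ℝ) × (Fin M → ℝ)) := by simp
    rw [hsplit, map_add, hUpart (L (Df h)), hLval, hdot, add_comm]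
  have h2 : DI (((0 : (Fin M → ℝ) →L[ℝ] (Fin N → ℝ)).prod (ContinuousLinearMap.id ℝ _)) h)
      = DI (0, h) := by simp
  rw [htot.fderiv, hT.fderiv]
  simp only [ContinuousLinearMap.comp_apply]
  rw [key, h2]
end

section
/- First-order optimality of the adjoint KKT system: suppose the triple (u*, T*, ũ*) satisfies the three stationarity conditions of the Lagrangian: (i) the forward problem K ·ᵥ u* = f_ext + f_T(T*); (ii) the adjoint problem Kᵀ ·ᵥ ũ* = g, where g is the gradient of u ↦ I(u, T*) at u*; and (iii) the gradient condition D_T I(u*, ·)(T*)[h] + ⟨ũ*, Df_T(T*)[h]⟩ = 0 for all directions h. Then T* is a critical point of the reduced cost Ĩ(T) = I(u(T), T), i.e., the Fréchet derivative of Ĩ at T* is the zero map. -/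
/-- First-order optimality of the adjoint KKT system: if `(u*, T*, utilde*)`
satisfies (i) the forward problem `K ·ᵥ u* = f_ext + f_T T*`, (ii) the adjoint problem
`Kᵀ ·ᵥ utilde* = g` with `g` the gradient of `u ↦ I (u, T*)` at `u*`, and (iii) the gradient
condition `D_T I(u*, ·)(T*)[h] + ⟨utilde*, Df_T(T*)[h]⟩ = 0` for all `h`, then `T*` is a
critical point of the reduced cost `Ĩ T = I (u T, T)`. -/
theorem adjoint_KKT_first_order_optimality
    (N M : ℕ) (K : Matrix (Fin N) (Fin N) ℝ) (hK : IsUnit K)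
    (f_ext : Fin N → ℝ) (f_T : (Fin M → ℝ) → (Fin N → ℝ))
    (hf : Differentiable ℝ f_T)
    (u : (Fin M → ℝ) → (Fin N → ℝ))
    (hu : ∀ T, u T = (K⁻¹).mulVec (f_ext + f_T T))
    (I : (Fin N → ℝ) × (Fin M → ℝ) → ℝ) (hI : Differentiable ℝ I)
    (Tstar : Fin M → ℝ) (ustar utildestar g : Fin N → ℝ)
    (hforward : K.mulVec ustar = f_ext + f_T Tstar)
    (hg : ∀ v : Fin N → ℝ, fderiv ℝ (fun w => I (w, Tstar)) ustar v = ∑ i, g i * v i)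
    (hadjoint : K.transpose.mulVec utildestar = g)
    (hgrad : ∀ h : Fin M → ℝ,
      fderiv ℝ (fun T => I (ustar, T)) Tstar h + ∑ i, utildestar i * fderiv ℝ f_T Tstar h i = 0) :
    fderiv ℝ (fun T => I (u T, T)) Tstar = 0 := by
  have hKdet : IsUnit K.det := (Matrix.isUnit_iff_isUnit_det K).mp hK
  have hinvmul : K⁻¹ * K = 1 := Matrix.nonsing_inv_mul K hKdet
  have hmulinv : K * K⁻¹ = 1 := Matrix.mul_nonsing_inv K hKdet
  have huT : u Tstar = ustar := by
    rw [hu Tstar, ← hforward, Matrix.mulVec_mulVec, hinvmul, Matrix.one_mulVec]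
  -- continuous linear map for K⁻¹ ·ᵥ
  let Lc : (Fin N → ℝ) →L[ℝ] (Fin N → ℝ) :=
    LinearMap.toContinuousLinearMap (Matrix.mulVecLin K⁻¹)
  have hfT : HasFDerivAt f_T (fderiv ℝ f_T Tstar) Tstar := (hf Tstar).hasFDerivAt
  have haff : HasFDerivAt (fun T => f_ext + f_T T) (fderiv ℝ f_T Tstar) Tstar :=
    hfT.const_add f_ext
  have hU : HasFDerivAt u ((Lc.comp (fderiv ℝ f_T Tstar))) Tstar := by
    have := Lc.hasFDerivAt.comp Tstar haff
    have hueq : u = ⇑Lc ∘ fun T => f_ext + f_T T := by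
      funext T
      simp [hu T, Lc]
    rw [hueq]; exact this
  set U : (Fin M → ℝ) →L[ℝ] (Fin N → ℝ) := Lc.comp (fderiv ℝ f_T Tstar)
  have hpair : HasFDerivAt (fun T => (u T, T)) (U.prod (ContinuousLinearMap.id ℝ _)) Tstar :=
    hU.prodMk (hasFDerivAt_id Tstar)
  have hDI : HasFDerivAt I (fderiv ℝ I (ustar, Tstar)) (ustar, Tstar) :=
    (hI (ustar, Tstar)).hasFDerivAt
  have hDI' : HasFDerivAt I (fderiv ℝ I (ustar, Tstar)) (u Tstar, Tstar) := by
    rw [huT]; exact hDI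
  have hcomp : HasFDerivAt (fun T => I (u T, T))
      ((fderiv ℝ I (ustar, Tstar)).comp (U.prod (ContinuousLinearMap.id ℝ _))) Tstar := by
    have hc := HasFDerivAt.comp (f := fun T => (u T, T)) Tstar hDI' hpair
    exact hc
  rw [hcomp.fderiv]
  ext h
  have h1 : fderiv ℝ (fun w => I (w, Tstar)) ustar =
      (fderiv ℝ I (ustar, Tstar)).comp (ContinuousLinearMap.inl ℝ _ _) :=
    (hDI.comp ustar (hasFDerivAt_prodMk_left ustar Tstar)).fderiv
  have h2 : fderiv ℝ (fun T => I (ustar, T)) Tstar =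
      (fderiv ℝ I (ustar, Tstar)).comp (ContinuousLinearMap.inr ℝ _ _) :=
    (hDI.comp Tstar (hasFDerivAt_prodMk_right ustar Tstar)).fderiv
  have hsplit : fderiv ℝ I (ustar, Tstar) (U h, h)
      = fderiv ℝ (fun w => I (w, Tstar)) ustar (U h)
        + fderiv ℝ (fun T => I (ustar, T)) Tstar h := by
    rw [h1, h2]
    have he : (U h, h) = ((U h, (0 : Fin M → ℝ)) : (Fin N → ℝ) × (Fin M → ℝ)) + (0, h) := by
      simp
    rw [he, map_add]
    rfl
  have hUh : U h = (K⁻¹).mulVec (fderiv ℝ f_T Tstar h) := rfl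
  have hg' : g = Matrix.vecMul utildestar K := by
    rw [← hadjoint, Matrix.mulVec_transpose]
  have key : fderiv ℝ (fun w => I (w, Tstar)) ustar (U h)
      = ∑ i, utildestar i * fderiv ℝ f_T Tstar h i := by
    rw [hg (U h), hUh, hg']
    change dotProduct (Matrix.vecMul utildestar K)
      ((K⁻¹).mulVec (fderiv ℝ f_T Tstar h)) = _
    rw [← Matrix.dotProduct_mulVec, Matrix.mulVec_mulVec, hmulinv, Matrix.one_mulVec]
    rfl
  have happ : ((fderiv ℝ I (ustar, Tstar)).comp
      (U.prod (ContinuousLinearMap.id ℝ (Fin M → ℝ)))) h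
      = fderiv ℝ I (ustar, Tstar) (U h, h) := rfl
  rw [ContinuousLinearMap.zero_apply, happ, hsplit, key]
  linarith [hgrad h]
end

section
/- Multi-load-case adjoint gradient formula: let there be n load cases with external loads f_i : Fin N → ℝ and differentiable per-case costs I_i : (Fin N → ℝ) × (Fin M → ℝ) → ℝ, i = 1,…,n, and let u_i(T) = K⁻¹ ·ᵥ (f_i + f_T(T)) be the per-case solution maps. Fix T₀ and let ũ_i solve the adjoint systems Kᵀ ·ᵥ ũ_i = g_i, where g_i is the gradient of u ↦ I_i(u, T₀) at u_i(T₀). Then the total reduced cost Ĩ(T) = ∑_{i=1}^n I_i(u_i(T), T) is differentiable at T₀ and for every direction h, DĨ(T₀)[h] = ∑_{i=1}^n ( D_T I_i(u_i(T₀), ·)(T₀)[h] + ⟨ũ_i, Df_T(T₀)[h]⟩ ). -/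
/-- Multi-load-case adjoint gradient formula: with per-case solution maps
`u i T = K⁻¹ ·ᵥ (f i + f_T T)` and adjoint solutions `Kᵀ ·ᵥ utilde i = g i` where `g i` is the
Euclidean gradient of `w ↦ I i (w, T₀)` at `u i T₀`, the total reduced cost
`Ĩ T = ∑ i, I i (u i T, T)` is differentiable at `T₀` and its directional derivative is
the sum of the per-case adjoint gradient contributions. -/
theorem multi_load_case_adjoint_gradient
    (N M n : ℕ) (K : Matrix (Fin N) (Fin N) ℝ) (hK : IsUnit K)
    (f : Fin n → Fin N → ℝ)
    (f_T : (Fin M → ℝ) → (Fin N → ℝ)) (hfT : Differentiable ℝ f_T)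
    (I : Fin n → (Fin N → ℝ) × (Fin M → ℝ) → ℝ) (hI : ∀ i, Differentiable ℝ (I i))
    (u : Fin n → (Fin M → ℝ) → (Fin N → ℝ))
    (hu : ∀ i T, u i T = (K⁻¹).mulVec (f i + f_T T))
    (T₀ : Fin M → ℝ) (utilde g : Fin n → Fin N → ℝ)
    (hg : ∀ i (v : Fin N → ℝ),
      fderiv ℝ (fun w => I i (w, T₀)) (u i T₀) v = ∑ j, g i j * v j)
    (hadj : ∀ i, K.transpose.mulVec (utilde i) = g i) :
    DifferentiableAt ℝ (fun T => ∑ i, I i (u i T, T)) T₀ ∧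
    ∀ h : Fin M → ℝ,
      fderiv ℝ (fun T => ∑ i, I i (u i T, T)) T₀ h =
        ∑ i, (fderiv ℝ (fun T => I i (u i T₀, T)) T₀ h +
              ∑ j, utilde i j * fderiv ℝ f_T T₀ h j) := by
  classical
  have hKdet : IsUnit K.det := (Matrix.isUnit_iff_isUnit_det K).mp hK
  set L : (Fin N → ℝ) →L[ℝ] (Fin N → ℝ) :=
    LinearMap.toContinuousLinearMap (Matrix.mulVecLin (K⁻¹)) with hL
  have hue : ∀ i, u i = fun T => L (f i + f_T T) := by
    intro i; funext T
    simp [hL, hu i T, Matrix.mulVecLin_apply]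
  have hudiff : ∀ i, DifferentiableAt ℝ (u i) T₀ := by
    intro i; rw [hue i]
    exact (L.differentiable.differentiableAt).comp T₀
      (((hfT T₀).const_add (f i)))
  have huderiv : ∀ i, HasFDerivAt (u i) (L.comp (fderiv ℝ f_T T₀)) T₀ := by
    intro i; rw [hue i]
    exact L.hasFDerivAt.comp T₀ (((hfT T₀).hasFDerivAt).const_add (f i))
  -- derivative of each composed cost
  have hDIdiff : ∀ i, DifferentiableAt ℝ (fun T => I i (u i T, T)) T₀ := by
    intro i
    exact ((hI i).differentiableAt).comp T₀ ((hudiff i).prodMk differentiableAt_id)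
  have key : ∀ i (h : Fin M → ℝ),
      fderiv ℝ (fun T => I i (u i T, T)) T₀ h =
        fderiv ℝ (fun T => I i (u i T₀, T)) T₀ h +
          ∑ j, utilde i j * fderiv ℝ f_T T₀ h j := by
    intro i h
    set D : (Fin N → ℝ) × (Fin M → ℝ) →L[ℝ] ℝ := fderiv ℝ (I i) (u i T₀, T₀) with hD
    have hcomp : HasFDerivAt (fun T => I i (u i T, T))
        (D.comp ((L.comp (fderiv ℝ f_T T₀)).prod (ContinuousLinearMap.id ℝ _))) T₀ := by
      have h1 : HasFDerivAt (fun T : Fin M → ℝ => (u i T, T))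
          ((L.comp (fderiv ℝ f_T T₀)).prod (ContinuousLinearMap.id ℝ _)) T₀ :=
        (huderiv i).prodMk (hasFDerivAt_id T₀)
      exact (HasFDerivAt.comp (f := fun T => (u i T, T)) (x := T₀) (((hI i) (u i T₀, T₀)).hasFDerivAt) h1 :)
    have hpartial1 : fderiv ℝ (fun w => I i (w, T₀)) (u i T₀) =
        D.comp (ContinuousLinearMap.inl ℝ (Fin N → ℝ) (Fin M → ℝ)) := by
      have : HasFDerivAt (fun w => I i (w, T₀))
          (D.comp (ContinuousLinearMap.inl ℝ (Fin N → ℝ) (Fin M → ℝ))) (u i T₀) :=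
        (HasFDerivAt.comp (f := fun w => (w, T₀)) (x := u i T₀) (((hI i) (u i T₀, T₀)).hasFDerivAt)
          ((hasFDerivAt_id _).prodMk (hasFDerivAt_const _ _)) :)
      exact this.fderiv
    have hpartial2 : fderiv ℝ (fun T => I i (u i T₀, T)) T₀ =
        D.comp (ContinuousLinearMap.inr ℝ (Fin N → ℝ) (Fin M → ℝ)) := by
      have : HasFDerivAt (fun T => I i (u i T₀, T))
          (D.comp (ContinuousLinearMap.inr ℝ (Fin N → ℝ) (Fin M → ℝ))) T₀ :=
        (HasFDerivAt.comp (f := fun T => (u i T₀, T)) (x := T₀) (((hI i) (u i T₀, T₀)).hasFDerivAt)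
          ((hasFDerivAt_const _ _).prodMk (hasFDerivAt_id _)) :)
      exact this.fderiv
    rw [hcomp.fderiv]
    have hsplit : D (L (fderiv ℝ f_T T₀ h), h) =
        D (L (fderiv ℝ f_T T₀ h), 0) + D (0, h) := by
      rw [← D.map_add]; congr 1; simp
    have hadjcalc : D (L (fderiv ℝ f_T T₀ h), 0) =
        ∑ j, utilde i j * fderiv ℝ f_T T₀ h j := by
      have h1 := hg i (L (fderiv ℝ f_T T₀ h))
      rw [hpartial1] at h1
      simp only [ContinuousLinearMap.comp_apply, ContinuousLinearMap.inl_apply] at h1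
      rw [h1]
      have hv : (fun j => L (fderiv ℝ f_T T₀ h) j) = (K⁻¹).mulVec (fderiv ℝ f_T T₀ h) := by
        funext j; simp [hL, Matrix.mulVecLin_apply]
      calc ∑ j, g i j * L (fderiv ℝ f_T T₀ h) j
          = dotProduct (g i) ((K⁻¹).mulVec (fderiv ℝ f_T T₀ h)) := by
            simp [dotProduct, hL, Matrix.mulVecLin_apply]
        _ = dotProduct (utilde i) (fderiv ℝ f_T T₀ h) := by
            rw [← hadj i, Matrix.mulVec_transpose, ← Matrix.dotProduct_mulVec,
              Matrix.mulVec_mulVec, Matrix.mul_nonsing_inv K hKdet, Matrix.one_mulVec]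
        _ = ∑ j, utilde i j * fderiv ℝ f_T T₀ h j := rfl
    simp only [ContinuousLinearMap.comp_apply, ContinuousLinearMap.prod_apply,
      ContinuousLinearMap.id_apply, hpartial2, ContinuousLinearMap.inr_apply]
    rw [hsplit, hadjcalc]; ring
  constructor
  · exact DifferentiableAt.fun_sum (fun i _ => hDIdiff i)
  · intro h
    rw [fderiv_fun_sum (fun i _ => hDIdiff i)]
    simp only [ContinuousLinearMap.coe_sum', Finset.sum_apply]
    exact Finset.sum_congr rfl fun i _ => (key i h).trans (by ring)
end
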